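/- Let d be a nonzero integer, i ∈ ℤ/2ℤ, and j ∈ {0,1}. Then as ℂ-linear endomorphisms of ℂ[𝒫]: (i) 𝓡 ∘ op = ε ∘ 𝓡; (ii) op ∘ 𝓡 = 𝓡 ∘ ε; (iii) op ∘ 𝓗ʲ_{d,i} = (−1)ʲ · 𝓗ʲ_{d,i} ∘ op; (iv) ε ∘ op = Θ ∘ op ∘ ε (equivalently, for every array X, d(X^op) = d(X) − Def(X)). -/

import Mathlib

open Finset

namespace ArrayComb

/-- Cells of an array: an element of ℤ × ℤ/2ℤ (arrays are those supported on ℕ × ℤ/2ℤ). -/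
abbrev Cell : Type := ℤ × ZMod 2

/-- An array is a finite subset of ℕ × ℤ/2ℤ. -/
def IsArray (X : Finset Cell) : Prop := ∀ c ∈ X, 0 ≤ c.1

/-- The row `Xʲ = {x : (x,j) ∈ X}`. -/
def row (X : Finset Cell) (j : ZMod 2) : Finset ℤ :=
  (X.filter fun c => c.2 = j).image Prod.fst

def cup (X : Finset Cell) : Finset ℤ := row X 0 ∪ row X 1
def cap (X : Finset Cell) : Finset ℤ := row X 0 ∩ row X 1
def sdiff' (X : Finset Cell) : Finset ℤ := symmDiff (row X 0) (row X 1)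

/-- The pairing `⟨A,B⟩ = |A ∩ B| mod 2`. -/
def pairing (A B : Finset ℤ) : ZMod 2 := ((A ∩ B).card : ZMod 2)

/-- The defect `Def(X) = |X⁰| - |X¹|`. -/
def defect (X : Finset Cell) : ℤ := ((row X 0).card : ℤ) - ((row X 1).card : ℤ)

/-- The special array `X_sp`. -/
noncomputable def sp (X : Finset Cell) : Finset Cell :=
  ((cap X) ×ˢ (Finset.univ : Finset (ZMod 2))) ∪
    (sdiff' X).image (fun x => (x, (((sdiff' X).card : ZMod 2) + pairing (sdiff' X) (Finset.Icc 0 x))))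

/-- `X^♯ = X¹ ⊖ (X_sp)¹`. -/
noncomputable def sharp (X : Finset Cell) : Finset ℤ := symmDiff (row X 1) (row (sp X) 1)

/-- `s(X) = 2^{(|X^⊖| - Def(X_sp))/2}`. -/
noncomputable def sconst (X : Finset Cell) : ℕ := 2 ^ (((sdiff' X).card - (defect (sp X)).toNat) / 2)

/-- `d(X) = (Def(X) - Def(X_sp))/2`. -/
noncomputable def dd (X : Finset Cell) : ℤ := (defect X - defect (sp X)) / 2

/-- The map `D_{d,i}` on cells. -/
def Dcell (d : ℤ) (i : ZMod 2) (c : Cell) : Cell := (c.1 - d, i + c.2)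

/-- The map `D_{d,i}` applied elementwise to a finite set of cells. -/
def Dset (d : ℤ) (i : ZMod 2) (H : Finset Cell) : Finset Cell := H.image (Dcell d i)

/-- `X ∖_{d,i} H = X ⊖ H ⊖ D_{d,i}(H)`. -/
def remove (d : ℤ) (i : ZMod 2) (X H : Finset Cell) : Finset Cell :=
  symmDiff (symmDiff X H) (Dset d i H)

/-- The `(d,i)`-hooks of `X`. -/
def hooks (d : ℤ) (i : ZMod 2) (X : Finset Cell) : Finset Cell :=
  X.filter fun c => 0 ≤ c.1 - d ∧ Dcell d i c ∉ X

/-- The leg parity `l_{d,i}(λ, X)`. -/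
noncomputable def leg (d : ℤ) (i : ZMod 2) (c : Cell) (X : Finset Cell) : ZMod 2 :=
  pairing (Finset.Icc 0 c.1) (row X c.2) +
    pairing (Finset.Icc 0 (c.1 - d)) (row (remove d i X {c}) (i + c.2))

/-- `X^op`, interchanging the two rows. -/
def opA (X : Finset Cell) : Finset Cell := Dset 0 1 X

/-- The free ℂ-module `ℂ[𝒫]` on the set of arrays. -/
abbrev CP := Finset Cell →₀ ℂ

/-- The similarity class `Sim(X)`: all arrays `Y` with `Y^∪ = X^∪` and `Y^∩ = X^∩`,
realized as a finite set. -/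
def SimSet (X : Finset Cell) : Finset (Finset Cell) :=
  ((cup X ×ˢ (Finset.univ : Finset (ZMod 2))).powerset).filter
    (fun Y => cup Y = cup X ∧ cap Y = cap X)

/-- The Fourier transform `𝓡` on basis elements. -/
noncomputable def Rfun (X : Finset Cell) : CP :=
  (sconst X : ℂ)⁻¹ •
    ∑ Y ∈ SimSet X, ((-1 : ℂ) ^ (pairing (sharp X) (sharp Y)).val) • Finsupp.single Y (1 : ℂ)

/-- The hook-removal operator `𝓗ʲ_{d,i}` on basis elements. -/
noncomputable def Hfun (d : ℤ) (i j : ZMod 2) (X : Finset Cell) : CP :=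
  ∑ c ∈ hooks d i X,
    ((-1 : ℂ) ^ (j * c.2 + leg d i c X).val) • Finsupp.single (remove d i X {c}) (1 : ℂ)

/-- Extension of a map defined on basis elements to a ℂ-linear endomorphism of `ℂ[𝒫]`. -/
noncomputable def lift (f : Finset Cell → CP) : CP →ₗ[ℂ] CP :=
  Finsupp.linearCombination ℂ f

/-- The operator `Θ`, `Θ(X) = (-1)^{Def(X)} X`, on basis elements. -/
noncomputable def Tfun (X : Finset Cell) : CP :=
  ((-1 : ℂ) ^ (defect X)) • Finsupp.single X (1 : ℂ)

/-- The operator `ε`, `ε(X) = (-1)^{d(X)} X`, on basis elements. -/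
noncomputable def Efun (X : Finset Cell) : CP :=
  ((-1 : ℂ) ^ (dd X)) • Finsupp.single X (1 : ℂ)

/-- The operator `op`, `op(X) = X^op`, on basis elements. -/
noncomputable def Ofun (X : Finset Cell) : CP := Finsupp.single (opA X) (1 : ℂ)


section Aux

lemma zmod_flip (a : ZMod 2) : 1 + (1 + a) = a := by revert a; decide

lemma zmod_sub_eq_add (a b : ZMod 2) : a - b = a + b := by revert a b; decide

lemma zmod_shift (a b : ZMod 2) : 1 + (a + (1 + b)) = a + b := by revert a b; decide

lemma z10 : (1 + 0 : ZMod 2) = 1 := by decide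
lemma z11 : (1 + 1 : ZMod 2) = 0 := by decide

lemma sign_add (a b : ZMod 2) : ((-1:ℂ))^((a+b).val) = (-1)^a.val * (-1)^b.val := by
  rw [ZMod.val_add]
  fin_cases a <;> fin_cases b <;>
    simp [ZMod.val]

lemma sign_sq (a : ZMod 2) : ((-1:ℂ))^a.val * (-1)^a.val = 1 := by
  fin_cases a <;>
    simp [ZMod.val]

lemma sign_int (n : ℤ) : ((-1:ℂ))^n = (-1:ℂ)^(((n : ZMod 2)).val) := by
  rcases Int.even_or_odd n with h | h
  · rw [h.neg_one_zpow]
    have h0 : ((n : ZMod 2)) = 0 := by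
      rw [ZMod.intCast_zmod_eq_zero_iff_dvd]; exact h.two_dvd
    simp [h0]
  · rw [h.neg_one_zpow]
    obtain ⟨k, rfl⟩ := h
    have h1 : (((2*k+1 : ℤ) : ZMod 2)) = 1 := by
      push_cast
      rw [show ((2:ZMod 2)) = 0 by decide]; ring
    rw [h1, show ((1:ZMod 2)).val = 1 by decide, pow_one]

lemma zsign_sq (n : ℤ) : ((-1:ℂ))^n * (-1:ℂ)^n = 1 := by
  rw [← zpow_add₀ (by norm_num : (-1:ℂ) ≠ 0)]
  have he : Even (n+n) := ⟨n, rfl⟩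
  exact he.neg_one_zpow

lemma card_symmDiff_cast (s t : Finset ℤ) :
    (((symmDiff s t).card : ZMod 2)) = (s.card : ZMod 2) + (t.card : ZMod 2) := by
  classical
  have e : symmDiff s t = (s \ t) ∪ (t \ s) := by
    ext x; simp [Finset.mem_symmDiff]; try tauto
  have h1 := Finset.card_sdiff_add_card_inter s t
  have h2 := Finset.card_sdiff_add_card_inter t s
  have h3 : (t ∩ s).card = (s ∩ t).card := by rw [Finset.inter_comm]
  have h4 : ((s ∩ t).card : ZMod 2) + ((s ∩ t).card : ZMod 2) = 0 := by
    rw [← two_mul, show ((2:ZMod 2)) = 0 by decide, zero_mul]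
  rw [e, Finset.card_union_of_disjoint disjoint_sdiff_sdiff]
  rw [← h1, ← h2, h3]
  push_cast
  linear_combination -h4

lemma pairing_symmDiff_left (A B t : Finset ℤ) :
    pairing (symmDiff A B) t = pairing A t + pairing B t := by
  have e : (symmDiff A B) ∩ t = symmDiff (A ∩ t) (B ∩ t) := by
    ext x; simp [Finset.mem_symmDiff]; try tauto
  unfold pairing
  rw [e, card_symmDiff_cast]

lemma pairing_comm (A B : Finset ℤ) : pairing A B = pairing B A := by
  unfold pairing; rw [Finset.inter_comm]

lemma pairing_symmDiff_right (A B t : Finset ℤ) :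
    pairing t (symmDiff A B) = pairing t A + pairing t B := by
  rw [pairing_comm, pairing_symmDiff_left, pairing_comm A, pairing_comm B]

lemma Dcell_invol (c : Cell) : Dcell 0 1 (Dcell 0 1 c) = c := by
  simp [Dcell, zmod_flip]

lemma Dcell_inj : Function.Injective (Dcell 0 1) :=
  Function.Involutive.injective Dcell_invol

lemma Dcell_comm (d : ℤ) (i : ZMod 2) (c : Cell) :
    Dcell 0 1 (Dcell d i c) = Dcell d i (Dcell 0 1 c) := by
  refine Prod.ext ?_ ?_ <;> simp [Dcell] <;> ring

lemma mem_opA {X : Finset Cell} {c : Cell} : c ∈ opA X ↔ Dcell 0 1 c ∈ X := by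
  unfold opA Dset
  constructor
  · intro h
    obtain ⟨a, ha, rfl⟩ := Finset.mem_image.1 h
    rwa [Dcell_invol]
  · intro h
    exact Finset.mem_image.2 ⟨_, h, Dcell_invol c⟩

lemma opA_opA (X : Finset Cell) : opA (opA X) = X := by
  unfold opA Dset
  rw [Finset.image_image]
  simp [Function.comp_def, Dcell_invol]

lemma mem_row {Y : Finset Cell} {x : ℤ} {j : ZMod 2} : x ∈ row Y j ↔ (x, j) ∈ Y := by
  constructor
  · intro h
    obtain ⟨⟨a, b⟩, hab, rfl⟩ := Finset.mem_image.1 h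
    obtain ⟨h1, h2⟩ := Finset.mem_filter.1 hab
    simp only at h2
    subst h2
    exact h1
  · intro h
    exact Finset.mem_image.2 ⟨(x, j), Finset.mem_filter.2 ⟨h, rfl⟩, rfl⟩

lemma row_opA (X : Finset Cell) (j : ZMod 2) : row (opA X) j = row X (1 + j) := by
  ext x
  rw [mem_row, mem_row, mem_opA]
  rw [show Dcell 0 1 (x, j) = (x - 0, 1 + j) from rfl, sub_zero]

lemma cup_opA (X : Finset Cell) : cup (opA X) = cup X := by
  unfold cup; rw [row_opA, row_opA, z10, z11, Finset.union_comm]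

lemma cap_opA (X : Finset Cell) : cap (opA X) = cap X := by
  unfold cap; rw [row_opA, row_opA, z10, z11, Finset.inter_comm]

lemma sdiff'_opA (X : Finset Cell) : sdiff' (opA X) = sdiff' X := by
  unfold sdiff'; rw [row_opA, row_opA, z10, z11, symmDiff_comm]

lemma defect_opA (X : Finset Cell) : defect (opA X) = - defect X := by
  unfold defect; rw [row_opA, row_opA, z10, z11]; ring

lemma sp_opA (X : Finset Cell) : sp (opA X) = sp X := by
  unfold sp; rw [cap_opA, sdiff'_opA]

lemma sharp_opA (X : Finset Cell) : sharp (opA X) = symmDiff (sdiff' X) (sharp X) := by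
  unfold sharp
  rw [row_opA, z11, sp_opA]
  ext x
  simp only [sdiff', Finset.mem_symmDiff]
  tauto

/-- The row-assignment function used in the definition of the special array. -/
noncomputable def fz (Z : Finset Cell) (x : ℤ) : ZMod 2 :=
  ((sdiff' Z).card : ZMod 2) + pairing (sdiff' Z) (Finset.Icc 0 x)

lemma mem_sp {Z : Finset Cell} {x : ℤ} {j : ZMod 2} :
    (x, j) ∈ sp Z ↔ x ∈ cap Z ∨ (x ∈ sdiff' Z ∧ fz Z x = j) := by
  unfold sp fz
  constructor
  · intro h
    rcases Finset.mem_union.1 h with h | h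
    · exact Or.inl (Finset.mem_product.1 h).1
    · right
      obtain ⟨a, ha, heq⟩ := Finset.mem_image.1 h
      rw [Prod.ext_iff] at heq
      obtain ⟨h1, h2⟩ := heq
      dsimp only at h1 h2
      subst h1
      exact ⟨ha, h2⟩
  · rintro (h | ⟨h1, h2⟩)
    · exact Finset.mem_union.2 (Or.inl (Finset.mem_product.2 ⟨h, Finset.mem_univ _⟩))
    · refine Finset.mem_union.2 (Or.inr (Finset.mem_image.2 ⟨x, h1, ?_⟩))
      rw [h2]

lemma sdiff'_cap_disj (Z : Finset Cell) (x : ℤ) (h1 : x ∈ sdiff' Z) (h2 : x ∈ cap Z) : False := by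
  simp [sdiff', cap, Finset.mem_symmDiff, Finset.mem_inter] at h1 h2
  tauto

lemma sdiff'_sp (Z : Finset Cell) : sdiff' (sp Z) = sdiff' Z := by
  have h01 : ∀ a : ZMod 2, a = 0 ∨ a = 1 := by decide
  ext x
  rw [show sdiff' (sp Z) = symmDiff (row (sp Z) 0) (row (sp Z) 1) from rfl]
  rw [Finset.mem_symmDiff, mem_row, mem_row, mem_sp, mem_sp]
  by_cases hc : x ∈ cap Z
  · have hns : x ∉ sdiff' Z := fun h => sdiff'_cap_disj Z x h hc
    simp [hc, hns]
  · rcases h01 (fz Z x) with h | h <;>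
      simp [hc, h, (by decide : (0:ZMod 2) ≠ 1), (by decide : (1:ZMod 2) ≠ 0)]

lemma defect_card (Z : Finset Cell) :
    defect Z = ((sdiff' Z).card : ℤ) - 2 * ((sdiff' Z ∩ row Z 1).card : ℤ) := by
  classical
  have e2 : sdiff' Z ∩ row Z 1 = row Z 1 \ row Z 0 := by
    ext x; simp [sdiff', Finset.mem_symmDiff]; try tauto
  have e1 : sdiff' Z = (row Z 0 \ row Z 1) ∪ (row Z 1 \ row Z 0) := by
    ext x; simp [sdiff', Finset.mem_symmDiff]; try tauto
  have h1 := Finset.card_sdiff_add_card_inter (row Z 0) (row Z 1)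
  have h2 := Finset.card_sdiff_add_card_inter (row Z 1) (row Z 0)
  have h3 : (row Z 1 ∩ row Z 0).card = (row Z 0 ∩ row Z 1).card := by rw [Finset.inter_comm]
  have h4 : ((row Z 0 \ row Z 1) ∪ (row Z 1 \ row Z 0)).card
      = (row Z 0 \ row Z 1).card + (row Z 1 \ row Z 0).card :=
    Finset.card_union_of_disjoint disjoint_sdiff_sdiff
  unfold defect
  rw [e2, e1, h4]
  push_cast
  omega

lemma defect_sp_card (Z : Finset Cell) :
    defect (sp Z) = ((sdiff' Z).card : ℤ) - 2 * ((sdiff' Z ∩ row (sp Z) 1).card : ℤ) := by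
  have h := defect_card (sp Z)
  rwa [sdiff'_sp] at h

lemma dd_card (Z : Finset Cell) :
    dd Z = ((sdiff' Z ∩ row (sp Z) 1).card : ℤ) - ((sdiff' Z ∩ row Z 1).card : ℤ) := by
  unfold dd
  rw [defect_card, defect_sp_card]
  omega

lemma two_dvd_dd (Z : Finset Cell) : defect Z - defect (sp Z) = 2 * dd Z := by
  rw [dd_card, defect_card, defect_sp_card]; ring

lemma dd_parity (Y : Finset Cell) : pairing (sdiff' Y) (sharp Y) = ((dd Y : ℤ) : ZMod 2) := by
  unfold pairing sharp
  have e : sdiff' Y ∩ symmDiff (row Y 1) (row (sp Y) 1)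
      = symmDiff (sdiff' Y ∩ row Y 1) (sdiff' Y ∩ row (sp Y) 1) := by
    ext x; simp [Finset.mem_symmDiff]; try tauto
  rw [e, card_symmDiff_cast, dd_card]
  push_cast
  rw [zmod_sub_eq_add]
  ring

lemma sdiff'_cupcap (Z : Finset Cell) : sdiff' Z = cup Z \ cap Z := by
  ext x; simp [sdiff', cup, cap, Finset.mem_symmDiff]; try tauto

lemma mem_SimSet {X Y : Finset Cell} (h : Y ∈ SimSet X) :
    Y ⊆ cup X ×ˢ (Finset.univ : Finset (ZMod 2)) ∧ cup Y = cup X ∧ cap Y = cap X := by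
  unfold SimSet at h
  rw [Finset.mem_filter, Finset.mem_powerset] at h
  tauto

lemma sdiff'_sim {X Y : Finset Cell} (h : Y ∈ SimSet X) : sdiff' Y = sdiff' X := by
  obtain ⟨-, h1, h2⟩ := mem_SimSet h
  rw [sdiff'_cupcap, sdiff'_cupcap, h1, h2]

lemma opA_mem_SimSet {X Y : Finset Cell} (h : Y ∈ SimSet X) : opA Y ∈ SimSet X := by
  obtain ⟨hsub, h1, h2⟩ := mem_SimSet h
  unfold SimSet
  rw [Finset.mem_filter, Finset.mem_powerset]
  refine ⟨?_, by rw [cup_opA, h1], by rw [cap_opA, h2]⟩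
  intro c hc
  have hc' := mem_opA.1 hc
  have hm := hsub hc'
  rw [Finset.mem_product] at hm ⊢
  refine ⟨?_, Finset.mem_univ _⟩
  simpa [Dcell] using hm.1

lemma SimSet_opA (X : Finset Cell) : SimSet (opA X) = SimSet X := by
  unfold SimSet; rw [cup_opA, cap_opA]

lemma sconst_opA (X : Finset Cell) : sconst (opA X) = sconst X := by
  unfold sconst; rw [sdiff'_opA, sp_opA]

lemma opA_symmDiff (A B : Finset Cell) : opA (symmDiff A B) = symmDiff (opA A) (opA B) :=
  Finset.image_symmDiff A B Dcell_inj

lemma opA_remove (d : ℤ) (i : ZMod 2) (X : Finset Cell) (c : Cell) :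
    opA (remove d i X {c}) = remove d i (opA X) {Dcell 0 1 c} := by
  unfold remove
  rw [opA_symmDiff, opA_symmDiff]
  have e1 : opA ({c} : Finset Cell) = {Dcell 0 1 c} := Finset.image_singleton _ _
  have e2 : opA (Dset d i {c}) = Dset d i ({Dcell 0 1 c} : Finset Cell) := by
    unfold opA Dset
    rw [Finset.image_singleton, Finset.image_singleton, Finset.image_singleton, Dcell_comm]
  rw [e1, e2]

lemma hooks_opA {d : ℤ} {i : ZMod 2} {X : Finset Cell} {c : Cell} (h : c ∈ hooks d i X) :
    Dcell 0 1 c ∈ hooks d i (opA X) := by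
  unfold hooks at h ⊢
  rw [Finset.mem_filter] at h ⊢
  obtain ⟨h1, h2, h3⟩ := h
  refine ⟨mem_opA.2 (by rwa [Dcell_invol]), by simpa [Dcell] using h2, ?_⟩
  intro hco
  apply h3
  have hm := mem_opA.1 hco
  rwa [Dcell_comm, Dcell_invol] at hm

lemma leg_opA (d : ℤ) (i : ZMod 2) (c : Cell) (X : Finset Cell) :
    leg d i (Dcell 0 1 c) (opA X) = leg d i c X := by
  unfold leg
  have hfst : (Dcell 0 1 c).1 = c.1 := by simp [Dcell]
  have hsnd : (Dcell 0 1 c).2 = 1 + c.2 := rfl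
  rw [hfst, hsnd, row_opA, zmod_flip, ← opA_remove, row_opA, zmod_shift]

lemma lift_single (f : Finset Cell → CP) (Y : Finset Cell) (c : ℂ) :
    lift f (Finsupp.single Y c) = c • f Y := by
  simp [lift]

end Aux

/-- Compatibilities of the Fourier transform and hook operators with `op`, `ε`, `Θ`:
(i) `𝓡 ∘ op = ε ∘ 𝓡`; (ii) `op ∘ 𝓡 = 𝓡 ∘ ε`; (iii) `op ∘ 𝓗ʲ_{d,i} = (-1)ʲ 𝓗ʲ_{d,i} ∘ op`;
(iv) `ε ∘ op = Θ ∘ op ∘ ε`, equivalently `d(X^op) = d(X) - Def(X)`. -/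
theorem fourier_op (d : ℤ) (hd : d ≠ 0) (i j : ZMod 2) (X : Finset Cell) (hX : IsArray X) :
    Rfun (opA X) = lift Efun (Rfun X) ∧
    lift Ofun (Rfun X) = lift Rfun (Efun X) ∧
    lift Ofun (Hfun d i j X) = ((-1 : ℂ) ^ j.val) • Hfun d i j (opA X) ∧
    Efun (opA X) = lift Tfun (lift Ofun (Efun X)) ∧
    dd (opA X) = dd X - defect X := by
  have h5 : dd (opA X) = dd X - defect X := by
    have h := two_dvd_dd X
    have h' := two_dvd_dd (opA X)
    rw [sp_opA, defect_opA] at h'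
    omega
  refine ⟨?_, ?_, ?_, ?_, h5⟩
  · -- (i)
    unfold Rfun
    rw [SimSet_opA, sconst_opA, map_smul, map_sum]
    congr 1
    refine Finset.sum_congr rfl (fun Y hY => ?_)
    rw [map_smul, lift_single, one_smul]
    unfold Efun
    rw [smul_smul]
    congr 1
    rw [sharp_opA, pairing_symmDiff_left, ← sdiff'_sim hY, dd_parity, sign_add, ← sign_int,
      mul_comm]
  · -- (ii)
    have eR : lift Rfun (Efun X) = ((-1:ℂ))^(dd X) • Rfun X := by
      unfold Efun; rw [map_smul, lift_single, one_smul]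
    rw [eR]
    unfold Rfun
    rw [map_smul, map_sum, smul_comm ((-1:ℂ)^(dd X)) ((sconst X : ℂ)⁻¹)]
    congr 1
    rw [Finset.smul_sum]
    simp only [map_smul, lift_single, one_smul, Ofun, smul_smul]
    refine Finset.sum_bij' (fun Y _ => opA Y) (fun Y _ => opA Y)
      (fun Y hY => opA_mem_SimSet hY) (fun Y hY => opA_mem_SimSet hY)
      (fun Y _ => opA_opA Y) (fun Y _ => opA_opA Y) ?_
    intro Y hY
    congr 1
    rw [sharp_opA, pairing_symmDiff_right, sdiff'_sim hY,
      pairing_comm (sharp X) (sdiff' X), dd_parity, sign_add, ← sign_int, ← mul_assoc,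
      zsign_sq, one_mul]
  · -- (iii)
    unfold Hfun
    rw [map_sum, Finset.smul_sum]
    simp only [map_smul, lift_single, one_smul, Ofun, smul_smul]
    refine Finset.sum_bij' (fun c _ => Dcell 0 1 c) (fun c _ => Dcell 0 1 c)
      (fun c hc => hooks_opA hc) ?_ (fun c _ => Dcell_invol c) (fun c _ => Dcell_invol c) ?_
    · intro c hc
      have h := hooks_opA hc
      rwa [opA_opA] at h
    · intro c hc
      rw [← opA_remove, leg_opA]
      congr 1
      conv_rhs => rw [show (Dcell 0 1 c).2 = 1 + c.2 from rfl, mul_add, mul_one, add_assoc,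
        sign_add, ← mul_assoc, sign_sq, one_mul]
  · -- (iv)
    have e1 : lift Ofun (Efun X) = ((-1:ℂ))^(dd X) • Finsupp.single (opA X) (1:ℂ) := by
      unfold Efun
      rw [map_smul, lift_single, one_smul]
      rfl
    rw [e1, map_smul, lift_single, one_smul]
    unfold Efun Tfun
    rw [h5, smul_smul, defect_opA, ← zpow_add₀ (by norm_num : (-1:ℂ) ≠ 0),
      show dd X + -defect X = dd X - defect X from by ring]


end ArrayComb
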